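/- Let G be a connected graph whose vertex set is partitioned into terminals R and non-terminals, and let G* be the component contracted graph obtained by contracting each connected component of G[R] to a single terminal vertex. Then G has a Steiner tree for R with at most k Steiner vertices if and only if G* has a Steiner tree for the contracted terminal set R* with at most k Steiner vertices. -/

import Mathlib

open SimpleGraph

variable {V : Type*}

def IsSteinerTree (G : SimpleGraph V) (R : Set V) (T : G.Subgraph) : Prop :=
  T.coe.IsTree ∧ R ⊆ T.verts

/-- The component contracted graph of `G` w.r.t. terminal set `R`: each connected component of
`G[R]` is contracted to a single (terminal) vertex; non-terminals keep their adjacencies, and a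
non-terminal is adjacent to a contracted component iff it has a neighbour in that component. -/
def contractedGraph (G : SimpleGraph V) (R : Set V) :
    SimpleGraph ({v : V // v ∉ R} ⊕ (G.induce R).ConnectedComponent) where
  Adj x y :=
    match x, y with
    | Sum.inl v, Sum.inl w => G.Adj v.val w.val
    | Sum.inl v, Sum.inr c => ∃ u ∈ c.supp, G.Adj v.val u.val
    | Sum.inr c, Sum.inl v => ∃ u ∈ c.supp, G.Adj v.val u.val
    | Sum.inr _, Sum.inr _ => False
  symm := by
    constructor
    rintro (v | c) (w | d) h
    · exact h.symm
    · exact h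
    · exact h
    · exact h
  loopless := by
    constructor
    rintro (v | c) h
    · exact G.ne_of_adj h rfl
    · exact h

section SpanningTree

variable {W : Type*}

private lemma chain_edges' {c : Set (SimpleGraph W)} (hc : IsChain (· ≤ ·) c)
    (hne : c.Nonempty) (l : List (Sym2 W)) (hl : ∀ e ∈ l, e ∈ (sSup c).edgeSet) :
    ∃ H ∈ c, ∀ e ∈ l, e ∈ H.edgeSet := by
  induction l with
  | nil => exact ⟨hne.choose, hne.choose_spec, by simp⟩
  | cons e l ih =>
    obtain ⟨H1, hH1, hH1l⟩ := ih (fun e he => hl e (List.mem_cons_of_mem _ he))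
    have he : e ∈ (sSup c).edgeSet := hl e List.mem_cons_self
    have : ∃ H2 ∈ c, e ∈ H2.edgeSet := by
      induction e with
      | _ a b =>
        rw [mem_edgeSet, sSup_adj] at he
        obtain ⟨H2, hH2, hab⟩ := he
        exact ⟨H2, hH2, hab⟩
    obtain ⟨H2, hH2, hab⟩ := this
    rcases eq_or_ne H1 H2 with rfl | hne'
    · refine ⟨H1, hH1, fun f hf => ?_⟩
      rcases List.mem_cons.mp hf with rfl | hf
      exacts [hab, hH1l f hf]
    · rcases hc hH1 hH2 hne' with h | h
      · refine ⟨H2, hH2, fun f hf => ?_⟩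
        rcases List.mem_cons.mp hf with rfl | hf
        exacts [hab, edgeSet_mono h (hH1l f hf)]
      · refine ⟨H1, hH1, fun f hf => ?_⟩
        rcases List.mem_cons.mp hf with rfl | hf
        exacts [edgeSet_mono h hab, hH1l f hf]

private lemma reachable_of_le' {A B : SimpleGraph W} (h : A ≤ B) {u v : W}
    (hr : A.Reachable u v) : B.Reachable u v :=
  hr.elim fun p => ⟨p.mapLe h⟩

private theorem exists_tree_le' {G : SimpleGraph W} (hG : G.Connected) :
    ∃ T, T ≤ G ∧ T.IsTree := by
  classical
  obtain ⟨M, hM⟩ := zorn_le₀ {H : SimpleGraph W | H ≤ G ∧ H.IsAcyclic} (by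
    intro c hcsub hc
    rcases c.eq_empty_or_nonempty with rfl | hne
    · exact ⟨⊥, ⟨bot_le, isAcyclic_bot⟩, by simp⟩
    refine ⟨sSup c, ⟨sSup_le fun H hH => (hcsub hH).1, ?_⟩, fun z hz => le_sSup hz⟩
    intro v w hw
    obtain ⟨H, hH, hHe⟩ := chain_edges' hc hne w.edges (fun e he => w.edges_subset_edgeSet he)
    exact (hcsub hH).2 (w.transfer H hHe) (hw.transfer hHe))
  obtain ⟨⟨hMG, hMac⟩, hmax⟩ := hM
  refine ⟨M, hMG, ?_, hMac⟩
  have key : ∀ a b : W, G.Adj a b → M.Reachable a b := by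
    intro a b hab
    by_contra hnr
    set M' := M ⊔ fromEdgeSet {s(a, b)} with hM'
    have hne : a ≠ b := hab.ne
    have hM'G : M' ≤ G := sup_le hMG (by
      intro x y hxy
      simp only [fromEdgeSet_adj, Set.mem_singleton_iff, Sym2.eq_iff] at hxy
      rcases hxy.1 with ⟨rfl, rfl⟩ | ⟨rfl, rfl⟩
      · exact hab
      · exact hab.symm)
    have hsd : M' \ fromEdgeSet {s(a, b)} ≤ M := by
      intro x y hxy
      rw [sdiff_adj] at hxy
      rcases (sup_adj _ _ _ _).mp hxy.1 with h | h
      · exact h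
      · exact absurd h hxy.2
    have hM'ac : M'.IsAcyclic := by
      intro x w hw
      by_cases hmem : s(a, b) ∈ w.edges
      · have : (M' \ fromEdgeSet {s(a, b)}).Reachable a b :=
          (adj_and_reachable_delete_edges_iff_exists_cycle.mpr ⟨x, w, hw, hmem⟩).2
        exact hnr (reachable_of_le' hsd this)
      · have hsub : ∀ e ∈ w.edges, e ∈ M.edgeSet := by
          intro e he
          have h2 := w.edges_subset_edgeSet he
          induction e with
          | _ u v =>
            rw [mem_edgeSet] at h2 ⊢
            rcases (sup_adj _ _ _ _).mp h2 with h | h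
            · exact h
            · rw [fromEdgeSet_adj, Set.mem_singleton_iff] at h
              exact absurd (h.1 ▸ he) hmem
        exact hMac (w.transfer M hsub) (hw.transfer hsub)
    have : M' ≤ M := hmax ⟨hM'G, hM'ac⟩ le_sup_left
    have hMadj : M.Adj a b := this ((le_sup_right : _ ≤ M') ((fromEdgeSet_adj _).mpr ⟨rfl, hne⟩))
    exact hnr hMadj.reachable
  have hpre : M.Preconnected := by
    intro u v
    obtain ⟨p⟩ := hG.preconnected u v
    induction p with
    | nil => exact Reachable.refl _
    | cons h p ih => exact (key _ _ h).trans ih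
  haveI := hG.nonempty
  exact ⟨hpre⟩

/-- Every subgraph whose coercion is connected contains a spanning tree subgraph. -/
private theorem exists_spanning_tree_subgraph {A : SimpleGraph W} (H : A.Subgraph)
    (hH : H.coe.Connected) :
    ∃ T : A.Subgraph, T ≤ H ∧ T.verts = H.verts ∧ T.coe.IsTree := by
  obtain ⟨S, hSle, hS⟩ := exists_tree_le' hH
  let T : A.Subgraph :=
    { verts := H.verts
      Adj := fun x y => ∃ (hx : x ∈ H.verts) (hy : y ∈ H.verts), S.Adj ⟨x, hx⟩ ⟨y, hy⟩
      adj_sub := fun h => H.adj_sub (hSle h.2.2)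
      edge_vert := fun h => h.1
      symm := ⟨fun x y h => ⟨h.2.1, h.1, h.2.2.symm⟩⟩ }
  have hcoe : T.coe = S := by
    ext u v
    constructor
    · rintro ⟨hx, hy, h⟩
      exact h
    · intro h
      exact ⟨u.2, v.2, h⟩
  exact ⟨T, ⟨subset_rfl, fun x y h => hSle h.2.2⟩, rfl, hcoe ▸ hS⟩

end SpanningTree

open Classical in
noncomputable def projCG (G : SimpleGraph V) (R : Set V) (v : V) :
    ({v : V // v ∉ R} ⊕ (G.induce R).ConnectedComponent) :=
  if h : v ∈ R then Sum.inr ((G.induce R).connectedComponentMk ⟨v, h⟩) else Sum.inl ⟨v, h⟩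

open Classical in
lemma projCG_of_mem {G : SimpleGraph V} {R : Set V} {v : V} (h : v ∈ R) :
    projCG G R v = Sum.inr ((G.induce R).connectedComponentMk ⟨v, h⟩) := dif_pos h

open Classical in
lemma projCG_of_not_mem {G : SimpleGraph V} {R : Set V} {v : V} (h : v ∉ R) :
    projCG G R v = Sum.inl ⟨v, h⟩ := dif_neg h

lemma projCG_mem_range_inr_iff {G : SimpleGraph V} {R : Set V} {v : V} :
    projCG G R v ∈ Set.range (Sum.inr (α := {v : V // v ∉ R})) ↔ v ∈ R := by
  constructor
  · intro h
    by_contra hv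
    rw [projCG_of_not_mem hv] at h
    obtain ⟨c, hc⟩ := h
    exact Sum.inr_ne_inl hc
  · intro h
    exact ⟨_, (projCG_of_mem h).symm⟩

lemma adj_projCG {G : SimpleGraph V} {R : Set V} {a b : V} (hab : G.Adj a b)
    (hne : projCG G R a ≠ projCG G R b) :
    (contractedGraph G R).Adj (projCG G R a) (projCG G R b) := by
  by_cases ha : a ∈ R <;> by_cases hb : b ∈ R
  · exfalso
    apply hne
    rw [projCG_of_mem ha, projCG_of_mem hb]
    congr 1
    exact ConnectedComponent.eq.mpr (Adj.reachable (by exact hab))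
  · rw [projCG_of_mem ha, projCG_of_not_mem hb]
    exact ⟨⟨a, ha⟩, rfl, hab.symm⟩
  · rw [projCG_of_not_mem ha, projCG_of_mem hb]
    exact ⟨⟨b, hb⟩, rfl, hab⟩
  · rw [projCG_of_not_mem ha, projCG_of_not_mem hb]
    exact hab

lemma forwardCG {G : SimpleGraph V} {R : Set V} {k : ℕ}
    (h : ∃ T : G.Subgraph, IsSteinerTree G R T ∧ (T.verts \ R).ncard ≤ k) :
    ∃ T' : (contractedGraph G R).Subgraph,
      IsSteinerTree (contractedGraph G R) (Set.range Sum.inr) T' ∧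
      (T'.verts \ Set.range Sum.inr).ncard ≤ k := by
  classical
  obtain ⟨T, ⟨hTtree, hTR⟩, hk⟩ := h
  set φ := projCG G R with hφ
  let H : (contractedGraph G R).Subgraph :=
    { verts := φ '' T.verts
      Adj := fun x y => (contractedGraph G R).Adj x y ∧
        ∃ a b, a ∈ T.verts ∧ b ∈ T.verts ∧ T.Adj a b ∧ φ a = x ∧ φ b = y
      adj_sub := fun h => h.1
      edge_vert := fun h => by
        obtain ⟨a, b, ha, hb, _, h1, _⟩ := h.2
        exact ⟨a, ha, h1⟩
      symm := ⟨fun x y h => ⟨h.1.symm, by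
        obtain ⟨a, b, ha, hb, hadj, h1, h2⟩ := h.2
        exact ⟨b, a, hb, ha, hadj.symm, h2, h1⟩⟩⟩ }
  have hinr : Set.range (Sum.inr (α := {v : V // v ∉ R})) ⊆ H.verts := by
    rintro _ ⟨c, rfl⟩
    obtain ⟨u, hu⟩ := c.exists_rep
    refine ⟨u.val, hTR u.2, ?_⟩
    rw [hφ, projCG_of_mem u.2]
    exact congrArg _ hu
  have hreach : ∀ (x y : ↥T.verts) (p : T.coe.Walk x y),
      H.coe.Reachable ⟨φ x.val, ⟨x.val, x.2, rfl⟩⟩ ⟨φ y.val, ⟨y.val, y.2, rfl⟩⟩ := by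
    intro x y p
    induction p with
    | nil => exact Reachable.refl _
    | @cons x w y h q ih =>
      by_cases heq : φ x.val = φ w.val
      · have : (⟨φ x.val, ⟨x.val, x.2, rfl⟩⟩ : ↥H.verts) = ⟨φ w.val, ⟨w.val, w.2, rfl⟩⟩ :=
          Subtype.ext heq
        rw [this]
        exact ih
      · refine (Adj.reachable ?_).trans ih
        exact ⟨adj_projCG (T.adj_sub h) heq, x.val, w.val, x.2, w.2, h, rfl, rfl⟩
  have hconn : H.coe.Connected := by
    have hne : Nonempty ↥T.verts := hTtree.isConnected.nonempty
    obtain ⟨t⟩ := hne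
    haveI : Nonempty ↥H.verts := ⟨⟨φ t.val, ⟨t.val, t.2, rfl⟩⟩⟩
    refine ⟨?_⟩
    rintro ⟨x, hx⟩ ⟨y, hy⟩
    obtain ⟨a, ha, rfl⟩ := hx
    obtain ⟨b, hb, rfl⟩ := hy
    obtain ⟨p⟩ := hTtree.isConnected.preconnected ⟨a, ha⟩ ⟨b, hb⟩
    exact hreach ⟨a, ha⟩ ⟨b, hb⟩ p
  obtain ⟨T', hle, hverts, htree⟩ := exists_spanning_tree_subgraph H hconn
  refine ⟨T', ⟨htree, hverts ▸ hinr⟩, ?_⟩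
  have hset : T'.verts \ Set.range Sum.inr = φ '' (T.verts \ R) := by
    rw [hverts]
    ext x
    constructor
    · rintro ⟨⟨a, ha, rfl⟩, hx⟩
      exact ⟨a, ⟨ha, fun hR => hx (projCG_mem_range_inr_iff.mpr hR)⟩, rfl⟩
    · rintro ⟨a, ⟨ha, haR⟩, rfl⟩
      exact ⟨⟨a, ha, rfl⟩, fun hmem => haR (projCG_mem_range_inr_iff.mp hmem)⟩
  rw [hset, Set.ncard_image_of_injOn]
  · exact hk
  · intro a ha b hb hab
    rw [hφ, projCG_of_not_mem ha.2, projCG_of_not_mem hb.2] at hab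
    simpa using hab

lemma backwardCG {G : SimpleGraph V} {R : Set V} {k : ℕ}
    (h : ∃ T' : (contractedGraph G R).Subgraph,
      IsSteinerTree (contractedGraph G R) (Set.range Sum.inr) T' ∧
      (T'.verts \ Set.range Sum.inr).ncard ≤ k) :
    ∃ T : G.Subgraph, IsSteinerTree G R T ∧ (T.verts \ R).ncard ≤ k := by
  classical
  obtain ⟨T', ⟨hTtree, hTR⟩, hk⟩ := h
  set φ := projCG G R with hφ
  have hRmem : ∀ {a : V}, a ∈ R → φ a ∈ T'.verts := fun {a} ha =>
    hTR (projCG_mem_range_inr_iff.mpr ha)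
  let H : G.Subgraph :=
    { verts := {v | φ v ∈ T'.verts}
      Adj := fun a b => G.Adj a b ∧ ((a ∈ R ∧ b ∈ R) ∨ T'.Adj (φ a) (φ b))
      adj_sub := fun h => h.1
      edge_vert := fun {a b} h => by
        rcases h.2 with ⟨ha, _⟩ | h2
        · exact hRmem ha
        · exact T'.edge_vert h2
      symm := ⟨fun a b h => ⟨h.1.symm, by
        rcases h.2 with ⟨ha, hb⟩ | h2
        · exact Or.inl ⟨hb, ha⟩
        · exact Or.inr h2.symm⟩⟩ }
  have hRverts : R ⊆ H.verts := fun a ha => hRmem ha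
  -- reachability within R-components
  have claim1 : ∀ (u w : ↥R) (p : (G.induce R).Walk u w),
      H.coe.Reachable ⟨u.val, hRverts u.2⟩ ⟨w.val, hRverts w.2⟩ := by
    intro u w p
    induction p with
    | nil => exact Reachable.refl _
    | @cons u x w hadj q ih =>
      refine (Adj.reachable ?_).trans ih
      exact ⟨hadj, Or.inl ⟨u.2, x.2⟩⟩
  have claim1' : ∀ (u w : ↥R),
      (G.induce R).connectedComponentMk u = (G.induce R).connectedComponentMk w →
      H.coe.Reachable ⟨u.val, hRverts u.2⟩ ⟨w.val, hRverts w.2⟩ := by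
    intro u w hc
    obtain ⟨p⟩ := ConnectedComponent.eq.mp hc
    exact claim1 u w p
  choose rep hrep using fun c : (G.induce R).ConnectedComponent => c.exists_rep
  let ψ : ({v : V // v ∉ R} ⊕ (G.induce R).ConnectedComponent) → V :=
    Sum.elim (fun v => v.val) (fun c => (rep c).val)
  have hψ : ∀ x ∈ T'.verts, ψ x ∈ H.verts := by
    rintro (v | c) hx
    · show φ v.val ∈ T'.verts
      rw [hφ, projCG_of_not_mem v.2]
      exact hx
    · exact hRverts (rep c).2
  have hφinl : ∀ (v : {v : V // v ∉ R}), φ v.val = Sum.inl v := fun v =>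
    projCG_of_not_mem v.2
  have hφinr : ∀ (u : ↥R), φ u.val = Sum.inr ((G.induce R).connectedComponentMk u) := fun u =>
    projCG_of_mem u.2
  -- a single T'-edge gives reachability between representatives
  have step : ∀ (x y : _) (hx : x ∈ T'.verts) (hy : y ∈ T'.verts), T'.Adj x y →
      H.coe.Reachable ⟨ψ x, hψ x hx⟩ ⟨ψ y, hψ y hy⟩ := by
    have main : ∀ (v : {v : V // v ∉ R}) (c : (G.induce R).ConnectedComponent)
        (hx : Sum.inl v ∈ T'.verts) (hy : Sum.inr c ∈ T'.verts),
        T'.Adj (Sum.inl v) (Sum.inr c) →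
        H.coe.Reachable ⟨ψ (Sum.inl v), hψ _ hx⟩ ⟨ψ (Sum.inr c), hψ _ hy⟩ := by
      intro v c hx hy hadj
      obtain ⟨u, hu, huadj⟩ := T'.adj_sub hadj
      have hucomp : (G.induce R).connectedComponentMk u = c := hu
      have huH : u.val ∈ H.verts := hRverts u.2
      have h1 : H.Adj v.val u.val := by
        refine ⟨huadj, Or.inr ?_⟩
        rw [hφinl v, hφinr u, hucomp]
        exact hadj
      have h2 : H.coe.Reachable ⟨u.val, huH⟩ ⟨(rep c).val, hRverts (rep c).2⟩ :=
        claim1' u (rep c) (by rw [hucomp]; exact (hrep c).symm)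
      exact (Adj.reachable (by exact h1)).trans h2
    rintro (v | c) (w | d) hx hy hadj
    · have hGadj : G.Adj v.val w.val := T'.adj_sub hadj
      refine Adj.reachable ?_
      show H.Adj v.val w.val
      refine ⟨hGadj, Or.inr ?_⟩
      rw [hφinl v, hφinl w]
      exact hadj
    · exact main v d hx hy hadj
    · exact (main w c hy hx hadj.symm).symm
    · exact absurd (T'.adj_sub hadj) (by exact id)
  -- connectivity of H
  have hconn : H.coe.Connected := by
    obtain ⟨⟨x0, hx0⟩⟩ := hTtree.isConnected.nonempty
    haveI : Nonempty ↥H.verts := ⟨⟨ψ x0, hψ x0 hx0⟩⟩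
    have claim2 : ∀ (x y : ↥T'.verts) (p : T'.coe.Walk x y),
        H.coe.Reachable ⟨ψ x.val, hψ _ x.2⟩ ⟨ψ y.val, hψ _ y.2⟩ := by
      intro x y p
      induction p with
      | nil => exact Reachable.refl _
      | @cons x w y hadj q ih => exact (step x.val w.val x.2 w.2 hadj).trans ih
    have stepA : ∀ (a : V) (ha : a ∈ H.verts),
        H.coe.Reachable ⟨a, ha⟩ ⟨ψ (φ a), hψ _ ha⟩ := by
      intro a ha
      by_cases haR : a ∈ R
      · have : φ a = Sum.inr ((G.induce R).connectedComponentMk ⟨a, haR⟩) :=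
          projCG_of_mem haR
        have h2 := claim1' ⟨a, haR⟩ (rep ((G.induce R).connectedComponentMk ⟨a, haR⟩))
          (by exact (hrep _).symm)
        refine h2.trans ?_
        have : (⟨(rep ((G.induce R).connectedComponentMk ⟨a, haR⟩)).val,
            hRverts (rep ((G.induce R).connectedComponentMk ⟨a, haR⟩)).2⟩ : ↥H.verts) =
            ⟨ψ (φ a), hψ _ ha⟩ := by
          apply Subtype.ext
          show _ = ψ (φ a)
          rw [hφ, projCG_of_mem haR]
          rfl
        rw [← this]
      · have : (⟨a, ha⟩ : ↥H.verts) = ⟨ψ (φ a), hψ _ ha⟩ := by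
          apply Subtype.ext
          show a = ψ (φ a)
          rw [hφ, projCG_of_not_mem haR]
          rfl
        rw [← this]
    refine ⟨?_⟩
    rintro ⟨a, ha⟩ ⟨b, hb⟩
    obtain ⟨p⟩ := hTtree.isConnected.preconnected ⟨φ a, ha⟩ ⟨φ b, hb⟩
    exact ((stepA a ha).trans (claim2 ⟨φ a, ha⟩ ⟨φ b, hb⟩ p)).trans (stepA b hb).symm
  obtain ⟨T, hle, hverts, htree⟩ := exists_spanning_tree_subgraph H hconn
  refine ⟨T, ⟨htree, hverts ▸ hRverts⟩, ?_⟩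
  have himg : φ '' (T.verts \ R) = T'.verts \ Set.range Sum.inr := by
    rw [hverts]
    ext x
    constructor
    · rintro ⟨a, ⟨ha, haR⟩, rfl⟩
      exact ⟨ha, fun hmem => haR (projCG_mem_range_inr_iff.mp hmem)⟩
    · rintro ⟨hx, hxr⟩
      obtain (v | c) := x
      · refine ⟨v.val, ⟨?_, v.2⟩, hφinl v⟩
        show φ v.val ∈ T'.verts
        rw [hφinl v]
        exact hx
      · exact absurd ⟨c, rfl⟩ hxr
  have hinj : Set.InjOn φ (T.verts \ R) := by
    intro a ha b hb hab
    rw [hφ, projCG_of_not_mem ha.2, projCG_of_not_mem hb.2] at hab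
    simpa using hab
  calc (T.verts \ R).ncard = (φ '' (T.verts \ R)).ncard := (Set.ncard_image_of_injOn hinj).symm
    _ = (T'.verts \ Set.range Sum.inr).ncard := by rw [himg]
    _ ≤ k := hk

/-- `G` has a Steiner tree for `R` with at most `k` Steiner vertices iff the component
contracted graph `G*` has a Steiner tree for the contracted terminal set `R*` with at most `k`
Steiner vertices. -/
theorem stmt7 (G : SimpleGraph V) (hG : G.Connected) (R : Set V) (k : ℕ) :
    (∃ T : G.Subgraph, IsSteinerTree G R T ∧ (T.verts \ R).ncard ≤ k) ↔
    (∃ T' : (contractedGraph G R).Subgraph,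
      IsSteinerTree (contractedGraph G R) (Set.range Sum.inr) T' ∧
      (T'.verts \ Set.range Sum.inr).ncard ≤ k) := by
  exact ⟨forwardCG, backwardCG⟩
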